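/- Let I ⊆ ℝ be an open interval and h : I → ℝ a twice continuously differentiable function such that h′(s) ≠ 0 for all s ∈ I and (1 + h(s)²)·h″(s) = h(s)·h′(s)² for all s ∈ I. Then there exist nonzero real constants a > 0 and b ≠ 0 such that h(s) = ½·(a·e^{bs} − a⁻¹·e^{−bs}) for all s ∈ I (equivalently, h(s) = sinh(bs + ln a); for a = b = 1 this is h(s) = sinh s). -/

import Mathlib

open Real

/-- If `h : I → ℝ` is C² on an open interval `I`, `h′` never vanishes on `I`,
and `(1 + h²)·h″ = h·h′²` on `I`, then there are constants `a > 0` and `b ≠ 0` with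
`h s = ½(a·e^{bs} − a⁻¹·e^{−bs})` on `I` (i.e. `h s = sinh (b·s + ln a)`; for `a = b = 1`
this is `h s = sinh s`). -/
lemma const_of_hasDerivAt_zero {I : Set ℝ} (hI : IsOpen I) (hconv : Convex ℝ I)
    {f : ℝ → ℝ} (hf : ∀ x ∈ I, HasDerivAt f 0 x) {x y : ℝ} (hx : x ∈ I) (hy : y ∈ I) :
    f x = f y := by
  refine hconv.is_const_of_fderivWithin_eq_zero
    (fun z hz => ((hf z hz).differentiableAt).differentiableWithinAt) (fun z hz => ?_) hx hy
  rw [fderivWithin_of_isOpen hI hz]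
  rw [(hf z hz).hasFDerivAt.fderiv]
  ext; simp

theorem mannheim_ode_solution
    (I : Set ℝ) (hI : IsOpen I) (hIconn : I.OrdConnected)
    (h : ℝ → ℝ) (hC2 : ContDiffOn ℝ 2 h I)
    (hd : ∀ s ∈ I, deriv h s ≠ 0)
    (hode : ∀ s ∈ I, (1 + h s ^ 2) * deriv (deriv h) s = h s * deriv h s ^ 2) :
    ∃ a b : ℝ, 0 < a ∧ b ≠ 0 ∧
      ∀ s ∈ I, h s = (a * Real.exp (b * s) - a⁻¹ * Real.exp (-(b * s))) / 2 := by
  rcases Set.eq_empty_or_nonempty I with hIe | ⟨s₀, hs₀⟩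
  · exact ⟨1, 1, one_pos, one_ne_zero, fun s hs => absurd hs (by simp [hIe])⟩
  have hconv : Convex ℝ I := convex_iff_ordConnected.mpr hIconn
  -- differentiability facts
  have hdh : ∀ s ∈ I, HasDerivAt h (deriv h s) s := fun s hs =>
    (((hC2.differentiableOn (by norm_num)) s hs).differentiableAt (hI.mem_nhds hs)).hasDerivAt
  have hC1d : ContDiffOn ℝ 1 (deriv h) I := hC2.deriv_of_isOpen hI (by norm_num)
  have hdd : ∀ s ∈ I, HasDerivAt (deriv h) (deriv (deriv h) s) s := fun s hs =>
    (((hC1d.differentiableOn (by norm_num)) s hs).differentiableAt (hI.mem_nhds hs)).hasDerivAt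
  set q : ℝ → ℝ := fun s => Real.sqrt (1 + h s ^ 2) with hq
  have hqpos : ∀ s, 0 < q s := fun s => Real.sqrt_pos.mpr (by positivity)
  have hqsq : ∀ s, q s ^ 2 = 1 + h s ^ 2 := fun s => Real.sq_sqrt (by positivity)
  have hqd : ∀ s ∈ I, HasDerivAt q (1 / (2 * q s) * (2 * h s * deriv h s)) s := by
    intro s hs
    have h1 : HasDerivAt (fun t => 1 + h t ^ 2) (2 * h s * deriv h s) s := by
      have := ((hdh s hs).pow 2).const_add 1
      simpa using this
    exact (Real.hasDerivAt_sqrt (by positivity)).comp s h1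
  set φ : ℝ → ℝ := fun s => deriv h s / q s with hφ
  -- derivative of φ is zero
  have hφd : ∀ s ∈ I, HasDerivAt φ 0 s := by
    intro s hs
    have := (hdd s hs).div (hqd s hs) (hqpos s).ne'
    have hQ := hqpos s
    have hsq := hqsq s
    have ho := hode s hs
    have key : (deriv (deriv h) s * q s - deriv h s * (1 / (2 * q s) * (2 * h s * deriv h s)))
        / q s ^ 2 = 0 := by
      rw [div_eq_zero_iff]; left
      field_simp
      linear_combination ho + deriv (deriv h) s * hsq
    rw [← key]
    exact this
  -- φ is constant
  set b : ℝ := φ s₀ with hb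
  have hφconst : ∀ s ∈ I, φ s = b := fun s hs =>
    const_of_hasDerivAt_zero hI hconv hφd hs hs₀
  have hbne : b ≠ 0 := div_ne_zero (hd s₀ hs₀) (hqpos s₀).ne'
  -- arsinh ∘ h has derivative φ
  have hGd : ∀ s ∈ I, HasDerivAt (fun t => Real.arsinh (h t) - b * t) 0 s := by
    intro s hs
    have h1 : HasDerivAt (fun t => Real.arsinh (h t)) ((Real.sqrt (1 + h s ^ 2))⁻¹ * deriv h s) s :=
      (Real.hasDerivAt_arsinh (h s)).comp s (hdh s hs)
    have h2 := h1.sub ((hasDerivAt_id s).const_mul b)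
    have hval : (Real.sqrt (1 + h s ^ 2))⁻¹ * deriv h s - b * 1 = 0 := by
      rw [← hφconst s hs]
      simp [hφ, hq, div_eq_inv_mul]
    rw [hval] at h2
    exact h2
  set c : ℝ := Real.arsinh (h s₀) - b * s₀ with hc
  have hGconst : ∀ s ∈ I, Real.arsinh (h s) - b * s = c := fun s hs =>
    const_of_hasDerivAt_zero hI hconv hGd hs hs₀
  refine ⟨Real.exp c, b, Real.exp_pos c, hbne, fun s hs => ?_⟩
  have h1 : Real.arsinh (h s) = b * s + c := by have := hGconst s hs; linarith
  have h2 : h s = Real.sinh (b * s + c) := by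
    rw [← h1, Real.sinh_arsinh]
  have e1 : Real.exp c * Real.exp (b * s) = Real.exp (b * s + c) := by
    rw [← Real.exp_add]; congr 1; ring
  have e2 : (Real.exp c)⁻¹ * Real.exp (-(b * s)) = Real.exp (-(b * s + c)) := by
    rw [← Real.exp_neg, ← Real.exp_add]; congr 1; ring
  rw [h2, Real.sinh_eq, e1, e2]
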